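/- Let Z be an n×n matrix, i ∈ {1,…,n−1}, t ∈ ℂ, and A, B ⊆ {1,…,n} with |A| = |B|. Then Δ_{A,B}(Z z_i(t)) equals Δ_{A,B}(Z) if s_i(B) = B; equals −Δ_{A, s_i(B)}(Z) if s_i(B) < B in lexicographic order; and equals t·Δ_{A,B}(Z) + Δ_{A, s_i(B)}(Z) if s_i(B) > B in lexicographic order. -/

import Mathlib

open Matrix Pointwise
open scoped Classical

noncomputable section

/-- `phi n i A` places the 2×2 matrix `A` into rows and columns `i, i+1`
(0-based) of the identity matrix. -/
def phi (n i : ℕ) (A : Matrix (Fin 2) (Fin 2) ℂ) : Matrix (Fin n) (Fin n) ℂ :=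
  Matrix.of fun a b =>
    if (a : ℕ) = i ∧ (b : ℕ) = i then A 0 0
    else if (a : ℕ) = i ∧ (b : ℕ) = i + 1 then A 0 1
    else if (a : ℕ) = i + 1 ∧ (b : ℕ) = i then A 1 0
    else if (a : ℕ) = i + 1 ∧ (b : ℕ) = i + 1 then A 1 1
    else if a = b then 1 else 0

def sdot (n i : ℕ) : Matrix (Fin n) (Fin n) ℂ := phi n i !![0, -1; 1, 0]
def xmat (n i : ℕ) (t : ℂ) : Matrix (Fin n) (Fin n) ℂ := phi n i !![1, t; 0, 1]
def ymat (n i : ℕ) (t : ℂ) : Matrix (Fin n) (Fin n) ℂ := phi n i !![1, 0; t, 1]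
def zmat (n i : ℕ) (t : ℂ) : Matrix (Fin n) (Fin n) ℂ := phi n i !![t, -1; 1, 0]
def zbar (n i : ℕ) (t : ℂ) : Matrix (Fin n) (Fin n) ℂ := phi n i !![t, 1; -1, 0]
def alphamat (n i : ℕ) (t : ℂ) : Matrix (Fin n) (Fin n) ℂ := phi n i !![t, 0; 0, 1/t]

/-- The simple transposition swapping `i` and `i+1` (0-based). -/
def sperm (n i : ℕ) : Equiv.Perm (Fin n) :=
  if h : i + 1 < n then Equiv.swap ⟨i, Nat.lt_of_succ_lt h⟩ ⟨i + 1, h⟩ else 1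

def wordPerm (n : ℕ) (l : List ℕ) : Equiv.Perm (Fin n) := (l.map (sperm n)).prod

def wordMat (n : ℕ) (l : List ℕ) : Matrix (Fin n) (Fin n) ℂ := (l.map (sdot n)).prod

def IsWordFor (n : ℕ) (l : List ℕ) (w : Equiv.Perm (Fin n)) : Prop :=
  (∀ i ∈ l, i + 1 < n) ∧ wordPerm n l = w

/-- Coxeter length on `S_n`. -/
def plen (n : ℕ) (w : Equiv.Perm (Fin n)) : ℕ :=
  sInf {k | ∃ l : List ℕ, IsWordFor n l w ∧ l.length = k}

def IsReducedWord (n : ℕ) (l : List ℕ) (w : Equiv.Perm (Fin n)) : Prop :=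
  IsWordFor n l w ∧ l.length = plen n w

/-- The minor of `M` with row set `A` and column set `B` (of equal sizes). -/
def minorD {n : ℕ} (M : Matrix (Fin n) (Fin n) ℂ) (A B : Finset (Fin n)) : ℂ :=
  if h : A.card = B.card then
    (M.submatrix (fun k => A.orderEmbOfFin rfl k) (fun k => B.orderEmbOfFin h.symm k)).det
  else 0

/-- `pset n w k = {w(1),…,w(k)}` (1-indexed), i.e. the image under `w`
of the first `k` elements of `Fin n`. -/
def pset (n : ℕ) (w : Equiv.Perm (Fin n)) (k : ℕ) : Finset (Fin n) :=
  (Finset.univ.filter fun j : Fin n => (j : ℕ) < k).image w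

/-- Upper unitriangular matrices. -/
def Uplus (n : ℕ) : Set (Matrix (Fin n) (Fin n) ℂ) :=
  {g | (∀ i, g i i = 1) ∧ ∀ i j : Fin n, j < i → g i j = 0}

/-- The double coset `U₊ M U₊`. -/
def DCoset (n : ℕ) (M : Matrix (Fin n) (Fin n) ℂ) : Set (Matrix (Fin n) (Fin n) ℂ) :=
  {x | ∃ a ∈ Uplus n, ∃ c ∈ Uplus n, x = a * M * c}

/-- The Borel subgroup of upper triangular matrices in SL_n. -/
def Bplus (n : ℕ) : Set (Matrix (Fin n) (Fin n) ℂ) :=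
  {g | g.det = 1 ∧ ∀ i j : Fin n, j < i → g i j = 0}

/-- The Bruhat cell `B₊ M B₊`. -/
def BruhatCell (n : ℕ) (M : Matrix (Fin n) (Fin n) ℂ) : Set (Matrix (Fin n) (Fin n) ℂ) :=
  {x | ∃ a ∈ Bplus n, ∃ c ∈ Bplus n, x = a * M * c}

/-- effect of right multiplication by a braid matrix on minors.
For the set `B`, the three cases `s_i(B) = B`, `s_i(B) < B`, `s_i(B) > B`
(lexicographically) correspond to: `i ∈ B ↔ i+1 ∈ B`; `i+1 ∈ B ∧ i ∉ B`;
and `i ∈ B ∧ i+1 ∉ B` (0-based indices). -/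
lemma mul_zmat_apply (n i : ℕ) (hi : i + 1 < n) (Z : Matrix (Fin n) (Fin n) ℂ) (t : ℂ)
    (a b : Fin n) :
    (Z * zmat n i t) a b =
      if (b : ℕ) = i then t * Z a ⟨i, by omega⟩ + Z a ⟨i + 1, hi⟩
      else if (b : ℕ) = i + 1 then - Z a ⟨i, by omega⟩
      else Z a b := by
  have hin : i < n := by omega
  set i0 : Fin n := ⟨i, hin⟩ with hi0
  set i1 : Fin n := ⟨i + 1, hi⟩ with hi1
  have h01 : i0 ≠ i1 := by simp [Fin.ext_iff, hi0, hi1]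
  rw [Matrix.mul_apply]
  by_cases hb : (b : ℕ) = i
  · have hbb : b = i0 := by simp [Fin.ext_iff, hi0, hb]
    have hz : ∀ k : Fin n, zmat n i t k b =
        (if k = i0 then t else 0) + (if k = i1 then 1 else 0) := by
      intro k
      subst hbb
      simp only [zmat, phi, Matrix.of_apply]
      by_cases hk0 : (k : ℕ) = i
      · have : k = i0 := by simp [Fin.ext_iff, hi0, hk0]
        simp [this, hi0, hi1, h01, Fin.ext_iff]
      · by_cases hk1 : (k : ℕ) = i + 1
        · have : k = i1 := by simp [Fin.ext_iff, hi1, hk1]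
          simp [this, hi1, h01.symm, hi0, Fin.ext_iff]
        · have h1 : k ≠ i0 := by simp [Fin.ext_iff, hi0, hk0]
          have h2 : k ≠ i1 := by simp [Fin.ext_iff, hi1, hk1]
          simp [hk0, hk1, h1, h2, hi0, Fin.ext_iff]
    simp only [hz, mul_add, mul_ite, mul_zero, mul_one, Finset.sum_add_distrib,
      Finset.sum_ite_eq', Finset.mem_univ, if_true, if_pos hb]
    ring
  · by_cases hb1 : (b : ℕ) = i + 1
    · have hbb : b = i1 := by simp [Fin.ext_iff, hi1, hb1]
      have hz : ∀ k : Fin n, zmat n i t k b = if k = i0 then -1 else 0 := by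
        intro k
        subst hbb
        simp only [zmat, phi, Matrix.of_apply]
        by_cases hk0 : (k : ℕ) = i
        · have : k = i0 := by simp [Fin.ext_iff, hi0, hk0]
          simp [this, hi0, hi1]
        · by_cases hk1 : (k : ℕ) = i + 1
          · have : k = i1 := by simp [Fin.ext_iff, hi1, hk1]
            simp [this, hi1, h01.symm, Fin.ext_iff, hi0]
          · have h1 : k ≠ i0 := by simp [Fin.ext_iff, hi0, hk0]
            have h2 : k ≠ i1 := by simp [Fin.ext_iff, hi1, hk1]
            simp [hk0, hk1, h1, h2, hi1, Fin.ext_iff]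
      simp only [hz, mul_ite, mul_neg, mul_one, mul_zero, Finset.sum_ite_eq',
        Finset.mem_univ, if_true, if_neg hb, if_pos hb1]
    · have hz : ∀ k : Fin n, zmat n i t k b = if k = b then 1 else 0 := by
        intro k
        simp only [zmat, phi, Matrix.of_apply]
        by_cases hk0 : (k : ℕ) = i
        · have h1 : k ≠ b := by simp [Fin.ext_iff]; omega
          simp [hk0, hb, hb1, h1]
        · by_cases hk1 : (k : ℕ) = i + 1
          · have h1 : k ≠ b := by simp [Fin.ext_iff]; omega
            simp [hk0, hk1, hb, hb1, h1]
          · simp [hk0, hk1, hb, hb1]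
      simp only [hz, mul_ite, mul_one, mul_zero, Finset.sum_ite_eq',
        Finset.mem_univ, if_true, if_neg hb, if_neg hb1]

theorem stmt7 (n i : ℕ) (hi : i + 1 < n) (Z : Matrix (Fin n) (Fin n) ℂ)
    (t : ℂ) (A B : Finset (Fin n)) (hAB : A.card = B.card) :
    (((⟨i, by omega⟩ : Fin n) ∈ B ↔ (⟨i + 1, hi⟩ : Fin n) ∈ B) →
      minorD (Z * zmat n i t) A B = minorD Z A B) ∧
    (((⟨i + 1, hi⟩ : Fin n) ∈ B ∧ (⟨i, by omega⟩ : Fin n) ∉ B) →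
      minorD (Z * zmat n i t) A B = - minorD Z A (B.image (sperm n i))) ∧
    (((⟨i, by omega⟩ : Fin n) ∈ B ∧ (⟨i + 1, hi⟩ : Fin n) ∉ B) →
      minorD (Z * zmat n i t) A B =
        t * minorD Z A B + minorD Z A (B.image (sperm n i))) := by
  have hin : i < n := by omega
  have hB : B.card = A.card := hAB.symm
  set i0 : Fin n := ⟨i, hin⟩ with hi0d
  set i1 : Fin n := ⟨i + 1, hi⟩ with hi1d
  have h01 : i0 ≠ i1 := by simp [Fin.ext_iff, hi0d, hi1d]
  set f : Fin A.card → Fin n := fun k => A.orderEmbOfFin rfl k with hfd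
  set g : Fin A.card → Fin n := fun k => B.orderEmbOfFin hB k with hgd
  have hginj : Function.Injective g := (B.orderEmbOfFin hB).injective
  have hgmono : StrictMono g := (B.orderEmbOfFin hB).strictMono
  have hgmem : ∀ k, g k ∈ B := fun k => Finset.orderEmbOfFin_mem B hB k
  have hgsurj : ∀ b ∈ B, ∃ k, g k = b := by
    intro b hb
    have : b ∈ Set.range (B.orderEmbOfFin hB) := by
      rw [Finset.range_orderEmbOfFin]; exact_mod_cast hb
    exact this
  set M : Matrix (Fin A.card) (Fin A.card) ℂ := Z.submatrix f g with hMd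
  have hMB : minorD Z A B = M.det := by rw [minorD, dif_pos hAB]
  have hNB : minorD (Z * zmat n i t) A B
      = ((Z * zmat n i t).submatrix f g).det := by rw [minorD, dif_pos hAB]
  have hσ : sperm n i = Equiv.swap i0 i1 := by rw [sperm, dif_pos hi]
  set B' : Finset (Fin n) := B.image (sperm n i) with hB'd
  have hAB' : A.card = B'.card := by
    rw [hB'd, Finset.card_image_of_injective _ (Equiv.injective _)]; exact hAB
  have hB' : B'.card = A.card := hAB'.symm
  have hmemB' : ∀ x ∈ B, x ≠ i0 → x ≠ i1 → x ∈ B' := by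
    intro x hx h0 h1
    rw [hB'd]
    exact Finset.mem_image.2 ⟨x, hx, by rw [hσ, Equiv.swap_apply_of_ne_of_ne h0 h1]⟩
  have hmem0 : i1 ∈ B → i0 ∈ B' := by
    intro h; rw [hB'd]
    exact Finset.mem_image.2 ⟨i1, h, by rw [hσ, Equiv.swap_apply_right]⟩
  have hmem1 : i0 ∈ B → i1 ∈ B' := by
    intro h; rw [hB'd]
    exact Finset.mem_image.2 ⟨i0, h, by rw [hσ, Equiv.swap_apply_left]⟩
  set ci : Fin A.card → ℂ := fun a => Z (f a) i0 with hcid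
  set ci1 : Fin A.card → ℂ := fun a => Z (f a) i1 with hci1d
  refine ⟨?_, ?_, ?_⟩
  · -- case s_i(B) = B
    intro h
    rw [hNB, hMB]
    by_cases h0 : i0 ∈ B
    · have h1 : i1 ∈ B := h.1 h0
      obtain ⟨k0, hk0⟩ := hgsurj i0 h0
      obtain ⟨k1, hk1⟩ := hgsurj i1 h1
      have hne : k0 ≠ k1 := fun e => h01 (by rw [← hk0, ← hk1, e])
      have hv0 : ((g k0 : Fin n) : ℕ) = i := by rw [hk0]
      have hv1 : ((g k1 : Fin n) : ℕ) = i + 1 := by rw [hk1]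
      have hv01 : ((g k1 : Fin n) : ℕ) ≠ i := by rw [hk1]; simp [hi1d]
      have hN : (Z * zmat n i t).submatrix f g
          = (M.updateCol k1 (fun a => -ci a)).updateCol k0
              (fun a => t * ci a + ci1 a) := by
        ext a k
        rw [Matrix.submatrix_apply, mul_zmat_apply n i hi]
        by_cases e0 : k = k0
        · rw [e0, Matrix.updateCol_self, if_pos hv0]
        · rw [Matrix.updateCol_ne e0]
          have hgk0 : g k ≠ i0 := fun e => e0 (hginj (by rw [e, hk0]))
          have hvi : ((g k : Fin n) : ℕ) ≠ i := by
            intro e; exact hgk0 (by simp [Fin.ext_iff, hi0d, e])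
          rw [if_neg hvi]
          by_cases e1 : k = k1
          · rw [e1, Matrix.updateCol_self, if_pos hv1]
          · rw [Matrix.updateCol_ne e1]
            have hgk1 : g k ≠ i1 := fun e => e1 (hginj (by rw [e, hk1]))
            have hvi1 : ((g k : Fin n) : ℕ) ≠ i + 1 := by
              intro e; exact hgk1 (by simp [Fin.ext_iff, hi1d, e])
            rw [if_neg hvi1]
            rfl
      rw [hN]
      set P := M.updateCol k1 (fun a => -ci a) with hPd
      have hsum : (fun a => t * ci a + ci1 a) = (t • ci) + ci1 := by
        funext a; simp [smul_eq_mul]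
      rw [hsum, Matrix.det_updateCol_add, Matrix.det_updateCol_smul]
      have hM0 : ∀ a, M a k0 = ci a := by
        intro a; rw [hMd, Matrix.submatrix_apply, hk0]
      have hM1 : ∀ a, M a k1 = ci1 a := by
        intro a; rw [hMd, Matrix.submatrix_apply, hk1]
      have hP0 : P.updateCol k0 ci = P := by
        have hc : ci = fun a => P a k0 := by
          funext a
          rw [hPd, Matrix.updateCol_ne hne]
          exact (hM0 a).symm
        rw [hc, Matrix.updateCol_eq_self]
      have hPdet : P.det = 0 := by
        rw [hPd]
        have hneg : (fun a => -ci a) = (-1 : ℂ) • ci := by funext a; simp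
        rw [hneg, Matrix.det_updateCol_smul]
        have hz : (M.updateCol k1 ci).det = 0 := by
          apply Matrix.det_zero_of_column_eq hne
          intro a
          rw [Matrix.updateCol_ne hne, Matrix.updateCol_self, hM0]
        rw [hz, mul_zero]
      have hswap : P.updateCol k0 ci1
          = ((M.submatrix id (Equiv.swap k0 k1)).updateCol k1
              (fun a => -ci a)) := by
        ext a k
        by_cases e0 : k = k0
        · rw [e0, Matrix.updateCol_self, Matrix.updateCol_ne hne,
            Matrix.submatrix_apply, Equiv.swap_apply_left, id]
          exact (hM1 a).symm
        · rw [Matrix.updateCol_ne e0]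
          by_cases e1 : k = k1
          · rw [e1]
            simp [hPd, Matrix.updateCol_apply, Ne.symm hne]
          · rw [Matrix.updateCol_ne e1, hPd, Matrix.updateCol_ne e1,
              Matrix.submatrix_apply, Equiv.swap_apply_of_ne_of_ne e0 e1, id]
      have hswap2 : ((M.submatrix id (Equiv.swap k0 k1)).updateCol k1
          (fun a => -ci a)).det = - (M.submatrix id (Equiv.swap k0 k1)).det := by
        have hneg : (fun a => -ci a) = (-1 : ℂ) • ci := by funext a; simp
        rw [hneg, Matrix.det_updateCol_smul]
        have hself : (M.submatrix id (Equiv.swap k0 k1)).updateCol k1 ci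
            = M.submatrix id (Equiv.swap k0 k1) := by
          have h2 : ci = fun a => (M.submatrix id (Equiv.swap k0 k1)) a k1 := by
            funext a
            rw [Matrix.submatrix_apply, Equiv.swap_apply_right, id]
            exact (hM0 a).symm
          rw [h2, Matrix.updateCol_eq_self]
        rw [hself]; ring
      have hperm : (M.submatrix id (Equiv.swap k0 k1)).det = - M.det := by
        rw [Matrix.det_permute', Equiv.Perm.sign_swap hne]
        simp
      rw [hP0, hPdet, hswap, hswap2, hperm]
      ring
    · have h1 : i1 ∉ B := fun hh => h0 (h.2 hh)
      have hN : (Z * zmat n i t).submatrix f g = M := by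
        ext a k
        rw [Matrix.submatrix_apply, mul_zmat_apply n i hi]
        have hgk0 : g k ≠ i0 := fun e => h0 (e ▸ hgmem k)
        have hgk1 : g k ≠ i1 := fun e => h1 (e ▸ hgmem k)
        have hvi : ((g k : Fin n) : ℕ) ≠ i := by
          intro e; exact hgk0 (by simp [Fin.ext_iff, hi0d, e])
        have hvi1 : ((g k : Fin n) : ℕ) ≠ i + 1 := by
          intro e; exact hgk1 (by simp [Fin.ext_iff, hi1d, e])
        rw [if_neg hvi, if_neg hvi1]
        rfl
      rw [hN]
  · -- case s_i(B) < B
    rintro ⟨h1, h0⟩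
    obtain ⟨k1, hk1⟩ := hgsurj i1 h1
    set u : Fin A.card → Fin n := Function.update g k1 i0 with hud
    have humem : ∀ k, u k ∈ B' := by
      intro k
      by_cases e : k = k1
      · rw [hud, e, Function.update_self]; exact hmem0 h1
      · rw [hud, Function.update_of_ne e]
        have hgk0 : g k ≠ i0 := fun e' => h0 (e' ▸ hgmem k)
        have hgk1 : g k ≠ i1 := fun e' => e (hginj (by rw [e', hk1]))
        exact hmemB' _ (hgmem k) hgk0 hgk1
    have humono : StrictMono u := by
      intro a b hab
      have hne' : a ≠ b := ne_of_lt hab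
      have hgab := hgmono hab
      rw [hud]
      by_cases ea : a = k1
      · rw [ea, Function.update_self,
          Function.update_of_ne (fun e => hne' (ea.trans e.symm))]
        rw [ea, hk1] at hgab
        rw [Fin.lt_def] at hgab ⊢
        simp only [hi0d, hi1d] at hgab ⊢
        omega
      · rw [Function.update_of_ne ea]
        by_cases eb : b = k1
        · rw [eb, Function.update_self]
          rw [eb, hk1] at hgab
          have hgk0 : g a ≠ i0 := fun e' => h0 (e' ▸ hgmem a)
          have hva : ((g a : Fin n) : ℕ) ≠ i := by
            intro e; exact hgk0 (by simp [Fin.ext_iff, hi0d, e])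
          rw [Fin.lt_def] at hgab ⊢
          simp only [hi0d, hi1d] at hgab ⊢
          omega
        · rw [Function.update_of_ne eb]
          exact hgab
    have hgu : u = fun k => B'.orderEmbOfFin hB' k :=
      Finset.orderEmbOfFin_unique hB' humem humono
    have hMB' : minorD Z A B' = (Z.submatrix f u).det := by
      rw [minorD, dif_pos hAB', ← hgu]
    have hZu : Z.submatrix f u = M.updateCol k1 ci := by
      ext a k
      by_cases e : k = k1
      · rw [e, Matrix.updateCol_self, Matrix.submatrix_apply, hud,
          Function.update_self]
      · rw [Matrix.updateCol_ne e, Matrix.submatrix_apply, hud,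
          Function.update_of_ne e]
        rfl
    have hN : (Z * zmat n i t).submatrix f g
        = M.updateCol k1 (fun a => -ci a) := by
      ext a k
      rw [Matrix.submatrix_apply, mul_zmat_apply n i hi]
      by_cases e : k = k1
      · have hv1 : ((g k1 : Fin n) : ℕ) = i + 1 := by rw [hk1]
        have hv0 : ((g k1 : Fin n) : ℕ) ≠ i := by rw [hk1]; simp [hi1d]
        rw [e, Matrix.updateCol_self, if_neg hv0, if_pos hv1]
      · rw [Matrix.updateCol_ne e]
        have hgk0 : g k ≠ i0 := fun e' => h0 (e' ▸ hgmem k)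
        have hgk1 : g k ≠ i1 := fun e' => e (hginj (by rw [e', hk1]))
        have hvi : ((g k : Fin n) : ℕ) ≠ i := by
          intro e'; exact hgk0 (by simp [Fin.ext_iff, hi0d, e'])
        have hvi1 : ((g k : Fin n) : ℕ) ≠ i + 1 := by
          intro e'; exact hgk1 (by simp [Fin.ext_iff, hi1d, e'])
        rw [if_neg hvi, if_neg hvi1]
        rfl
    rw [hNB, hMB', hN, hZu]
    have hneg : (fun a => -ci a) = (-1 : ℂ) • ci := by funext a; simp
    rw [hneg, Matrix.det_updateCol_smul]
    ring
  · -- case s_i(B) > B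
    rintro ⟨h0, h1⟩
    obtain ⟨k0, hk0⟩ := hgsurj i0 h0
    set u : Fin A.card → Fin n := Function.update g k0 i1 with hud
    have humem : ∀ k, u k ∈ B' := by
      intro k
      by_cases e : k = k0
      · rw [hud, e, Function.update_self]; exact hmem1 h0
      · rw [hud, Function.update_of_ne e]
        have hgk0 : g k ≠ i0 := fun e' => e (hginj (by rw [e', hk0]))
        have hgk1 : g k ≠ i1 := fun e' => h1 (e' ▸ hgmem k)
        exact hmemB' _ (hgmem k) hgk0 hgk1
    have humono : StrictMono u := by
      intro a b hab
      have hne' : a ≠ b := ne_of_lt hab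
      have hgab := hgmono hab
      rw [hud]
      by_cases ea : a = k0
      · rw [ea, Function.update_self,
          Function.update_of_ne (fun e => hne' (ea.trans e.symm))]
        rw [ea, hk0] at hgab
        have hgk1 : g b ≠ i1 := fun e' => h1 (e' ▸ hgmem b)
        have hvb : ((g b : Fin n) : ℕ) ≠ i + 1 := by
          intro e; exact hgk1 (by simp [Fin.ext_iff, hi1d, e])
        rw [Fin.lt_def] at hgab ⊢
        simp only [hi0d, hi1d] at hgab ⊢
        omega
      · rw [Function.update_of_ne ea]
        by_cases eb : b = k0
        · rw [eb, Function.update_self]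
          rw [eb, hk0] at hgab
          rw [Fin.lt_def] at hgab ⊢
          simp only [hi0d, hi1d] at hgab ⊢
          omega
        · rw [Function.update_of_ne eb]
          exact hgab
    have hgu : u = fun k => B'.orderEmbOfFin hB' k :=
      Finset.orderEmbOfFin_unique hB' humem humono
    have hMB' : minorD Z A B' = (Z.submatrix f u).det := by
      rw [minorD, dif_pos hAB', ← hgu]
    have hZu : Z.submatrix f u = M.updateCol k0 ci1 := by
      ext a k
      by_cases e : k = k0
      · rw [e, Matrix.updateCol_self, Matrix.submatrix_apply, hud,
          Function.update_self]
      · rw [Matrix.updateCol_ne e, Matrix.submatrix_apply, hud,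
          Function.update_of_ne e]
        rfl
    have hN : (Z * zmat n i t).submatrix f g
        = M.updateCol k0 (fun a => t * ci a + ci1 a) := by
      ext a k
      rw [Matrix.submatrix_apply, mul_zmat_apply n i hi]
      by_cases e : k = k0
      · have hv0 : ((g k0 : Fin n) : ℕ) = i := by rw [hk0]
        rw [e, Matrix.updateCol_self, if_pos hv0]
      · rw [Matrix.updateCol_ne e]
        have hgk0 : g k ≠ i0 := fun e' => e (hginj (by rw [e', hk0]))
        have hgk1 : g k ≠ i1 := fun e' => h1 (e' ▸ hgmem k)
        have hvi : ((g k : Fin n) : ℕ) ≠ i := by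
          intro e'; exact hgk0 (by simp [Fin.ext_iff, hi0d, e'])
        have hvi1 : ((g k : Fin n) : ℕ) ≠ i + 1 := by
          intro e'; exact hgk1 (by simp [Fin.ext_iff, hi1d, e'])
        rw [if_neg hvi, if_neg hvi1]
        rfl
    rw [hNB, hMB, hMB', hN, hZu]
    have hsum : (fun a => t * ci a + ci1 a) = (t • ci) + ci1 := by
      funext a; simp [smul_eq_mul]
    rw [hsum, Matrix.det_updateCol_add, Matrix.det_updateCol_smul]
    have hM0 : ci = fun a => M a k0 := by
      funext a; rw [hMd, Matrix.submatrix_apply, hk0]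
    rw [hM0, Matrix.updateCol_eq_self]
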